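/- arXiv:2007.02113 — 3 statements merged into one kernel-verified Lean document; each statement's English description precedes it below -/
import Mathlib

section
/- For every H ∈ (0, 1/2) and T > 0, there exist, for each n ≥ 1, positive weights (α_i^n)_{1≤i≤n} and positive mean-reversion speeds (x_i^n)_{1≤i≤n} such that the exponential kernels K^n(τ) = ∑_{i=1}^n α_i^n e^{-x_i^n τ} converge to the power-law kernel K(τ) = τ^{H-1/2} in L²([0,T]): ‖K^n − K‖_{L²([0,T])} → 0 as n → ∞. -/
open MeasureTheory Real Filter

noncomputable def expK (s τ x : ℝ) : ℝ := x ^ (s - 1) * Real.exp (-(τ * x))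

lemma expK_integrable {s τ : ℝ} (hs : 0 < s) (hτ : 0 < τ) :
    IntegrableOn (expK s τ) (Set.Ioi 0) := by
  have h := integrableOn_rpow_mul_exp_neg_mul_rpow (s := s - 1) (p := 1) (b := τ)
    (by linarith) zero_lt_one hτ
  refine h.congr_fun (fun x hx => ?_) measurableSet_Ioi
  simp [expK, Real.rpow_one, neg_mul]

lemma expK_nonneg {s τ x : ℝ} (hx : 0 ≤ x) : 0 ≤ expK s τ x :=
  mul_nonneg (Real.rpow_nonneg hx _) (Real.exp_pos _).le

lemma expK_anti {s τ : ℝ} (hs1 : s < 1) (hτ : 0 < τ) {x y : ℝ} (hx : 0 < x) (hxy : x ≤ y) :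
    expK s τ y ≤ expK s τ x := by
  unfold expK
  have h1 : y ^ (s - 1) ≤ x ^ (s - 1) :=
    Real.rpow_le_rpow_of_nonpos hx hxy (by linarith)
  have h2 : Real.exp (-(τ * y)) ≤ Real.exp (-(τ * x)) := by
    apply Real.exp_le_exp.2; nlinarith
  exact mul_le_mul h1 h2 (Real.exp_pos _).le (Real.rpow_nonneg hx.le _)

lemma expK_intble_Ioc {s τ a b : ℝ} (hs : 0 < s) (hτ : 0 < τ) (ha : 0 ≤ a) :
    IntegrableOn (expK s τ) (Set.Ioc a b) :=
  (expK_integrable hs hτ).mono_set (fun x hx => ha.trans_lt hx.1)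

lemma expK_step_le {s τ : ℝ} (hs : 0 < s) (hs1 : s < 1) (hτ : 0 < τ)
    {a b : ℝ} (ha : 0 ≤ a) (hab : a ≤ b) :
    (b - a) * expK s τ b ≤ ∫ x in a..b, expK s τ x := by
  rw [intervalIntegral.integral_of_le hab]
  have h : (b - a) * expK s τ b = ∫ _ in Set.Ioc a b, expK s τ b := by
    rw [setIntegral_const, measureReal_def, Real.volume_Ioc, ENNReal.toReal_ofReal (by linarith), smul_eq_mul]
  rw [h]
  refine setIntegral_mono_on (integrableOn_const measure_Ioc_lt_top.ne)
    (expK_intble_Ioc hs hτ ha) measurableSet_Ioc (fun x hx => ?_)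
  exact expK_anti hs1 hτ (ha.trans_lt hx.1) hx.2

lemma expK_le_step {s τ : ℝ} (hs : 0 < s) (hs1 : s < 1) (hτ : 0 < τ)
    {a b : ℝ} (ha : 0 < a) (hab : a ≤ b) :
    ∫ x in a..b, expK s τ x ≤ (b - a) * expK s τ a := by
  rw [intervalIntegral.integral_of_le hab]
  have h : (b - a) * expK s τ a = ∫ _ in Set.Ioc a b, expK s τ a := by
    rw [setIntegral_const, measureReal_def, Real.volume_Ioc, ENNReal.toReal_ofReal (by linarith), smul_eq_mul]
  rw [h]
  refine setIntegral_mono_on (expK_intble_Ioc hs hτ ha.le)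
    (integrableOn_const measure_Ioc_lt_top.ne) measurableSet_Ioc (fun x hx => ?_)
  exact expK_anti hs1 hτ ha hx.1.le

lemma expK_nonneg_ae {s τ : ℝ} :
    0 ≤ᵐ[volume.restrict (Set.Ioi (0:ℝ))] expK s τ := by
  filter_upwards [ae_restrict_mem measurableSet_Ioi] with x hx
  exact expK_nonneg (le_of_lt hx)

/-- Riemann sum with right endpoints on the grid `i/√n` is at most the full integral. -/
lemma expK_sum_le_integral {s τ : ℝ} (hs : 0 < s) (hs1 : s < 1) (hτ : 0 < τ) (n : ℕ) :
    (∑ i ∈ Finset.Icc 1 n,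
        (Real.sqrt n)⁻¹ * expK s τ ((i : ℝ) * (Real.sqrt n)⁻¹))
      ≤ ∫ x in Set.Ioi 0, expK s τ x := by
  set Δ : ℝ := (Real.sqrt n)⁻¹ with hΔdef
  have hΔ : 0 ≤ Δ := inv_nonneg.2 (Real.sqrt_nonneg _)
  have hint : ∀ k : ℕ, IntervalIntegrable (expK s τ) volume ((k : ℝ) * Δ) ((k + 1 : ℝ) * Δ) := by
    intro k
    rw [intervalIntegrable_iff_integrableOn_Ioc_of_le (by nlinarith [Nat.cast_nonneg (α := ℝ) k])]
    exact expK_intble_Ioc hs hτ (by positivity)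
  calc ∑ i ∈ Finset.Icc 1 n, Δ * expK s τ ((i : ℝ) * Δ)
      = ∑ j ∈ Finset.range n, Δ * expK s τ (((j : ℝ) + 1) * Δ) := by
        rw [show Finset.Icc 1 n = Finset.Ico 1 (n+1) by rw [Finset.Ico_add_one_right_eq_Icc],
          Finset.sum_Ico_eq_sum_range]
        simp only [Nat.add_sub_cancel]
        refine Finset.sum_congr rfl (fun j _ => ?_)
        norm_num [add_comm]
    _ ≤ ∑ j ∈ Finset.range n, ∫ x in ((j:ℝ) * Δ)..(((j:ℝ) + 1) * Δ), expK s τ x := by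
        refine Finset.sum_le_sum (fun j _ => ?_)
        have := expK_step_le hs hs1 hτ (a := (j:ℝ) * Δ) (b := ((j:ℝ)+1) * Δ)
          (by positivity) (by nlinarith [Nat.cast_nonneg (α := ℝ) j])
        calc Δ * expK s τ (((j:ℝ)+1) * Δ)
            = (((j:ℝ)+1) * Δ - (j:ℝ) * Δ) * expK s τ (((j:ℝ)+1)*Δ) := by ring_nf
          _ ≤ _ := this
    _ = ∫ x in ((0:ℕ) * Δ : ℝ)..((n:ℝ) * Δ), expK s τ x := by
        have := intervalIntegral.sum_integral_adjacent_intervals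
          (a := fun k : ℕ => (k : ℝ) * Δ) (f := expK s τ) (μ := volume) (n := n)
          (fun k _ => by push_cast; exact hint k)
        rw [← this]
        refine Finset.sum_congr rfl (fun j _ => ?_)
        push_cast
        rfl
    _ ≤ ∫ x in Set.Ioi 0, expK s τ x := by
        rw [Nat.cast_zero, zero_mul, intervalIntegral.integral_of_le (by positivity)]
        exact setIntegral_mono_set (expK_integrable hs hτ) expK_nonneg_ae
          (Set.Ioc_subset_Ioi_self).eventuallyLE

/-- The integral over `(1/√n, √n]` is at most the Riemann sum with left endpoints. -/
lemma expK_integral_le_sum {s τ : ℝ} (hs : 0 < s) (hs1 : s < 1) (hτ : 0 < τ)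
    {n : ℕ} (hn : 1 ≤ n) :
    (∫ x in Set.Ioc ((Real.sqrt n)⁻¹) (Real.sqrt n), expK s τ x)
      ≤ ∑ i ∈ Finset.Icc 1 n,
          (Real.sqrt n)⁻¹ * expK s τ ((i : ℝ) * (Real.sqrt n)⁻¹) := by
  set Δ : ℝ := (Real.sqrt n)⁻¹ with hΔdef
  have hn0 : (0:ℝ) < n := by exact_mod_cast hn
  have hsq : 0 < Real.sqrt n := Real.sqrt_pos.2 hn0
  have hΔ : 0 < Δ := inv_pos.2 hsq
  have hnΔ : (n : ℝ) * Δ = Real.sqrt n := by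
    rw [hΔdef, mul_inv_eq_iff_eq_mul₀ hsq.ne']
    rw [Real.mul_self_sqrt hn0.le]
  have hint : ∀ k : ℕ, IntervalIntegrable (expK s τ) volume
      (((k : ℝ) + 1) * Δ) (((k : ℝ) + 2) * Δ) := by
    intro k
    rw [intervalIntegrable_iff_integrableOn_Ioc_of_le
      (by nlinarith [Nat.cast_nonneg (α := ℝ) k])]
    exact expK_intble_Ioc hs hτ (by positivity)
  have key : (∫ x in (1 * Δ)..(((n:ℝ) + 1) * Δ), expK s τ x)
      ≤ ∑ i ∈ Finset.Icc 1 n, Δ * expK s τ ((i : ℝ) * Δ) := by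
    have hadj := intervalIntegral.sum_integral_adjacent_intervals
      (a := fun k : ℕ => ((k : ℝ) + 1) * Δ) (f := expK s τ) (μ := volume) (n := n)
      (fun k _ => by push_cast; convert hint k using 2 <;> ring)
    rw [show (1:ℝ) * Δ = (((0:ℕ):ℝ) + 1) * Δ by norm_num,
        show ((n:ℝ) + 1) * Δ = (((n:ℕ):ℝ) + 1) * Δ by norm_num, ← hadj]
    calc ∑ k ∈ Finset.range n, ∫ x in (((k:ℝ)+1) * Δ)..((((k+1:ℕ)):ℝ) + 1) * Δ, expK s τ x
        ≤ ∑ k ∈ Finset.range n, Δ * expK s τ (((k:ℝ)+1) * Δ) := by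
          refine Finset.sum_le_sum (fun k _ => ?_)
          have h := expK_le_step hs hs1 hτ (a := ((k:ℝ)+1) * Δ) (b := ((k:ℝ)+2) * Δ)
            (by positivity) (by nlinarith [Nat.cast_nonneg (α := ℝ) k])
          have heq : (((k+1:ℕ)):ℝ) + 1 = (k:ℝ) + 2 := by push_cast; ring
          rw [heq]
          calc (∫ x in (((k:ℝ)+1) * Δ)..(((k:ℝ)+2) * Δ), expK s τ x)
              ≤ (((k:ℝ)+2) * Δ - ((k:ℝ)+1) * Δ) * expK s τ (((k:ℝ)+1) * Δ) := h
            _ = Δ * expK s τ (((k:ℝ)+1) * Δ) := by ring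
      _ = ∑ i ∈ Finset.Icc 1 n, Δ * expK s τ ((i : ℝ) * Δ) := by
          rw [show Finset.Icc 1 n = Finset.Ico 1 (n+1) by rw [Finset.Ico_add_one_right_eq_Icc],
            Finset.sum_Ico_eq_sum_range]
          simp only [Nat.add_sub_cancel]
          refine (Finset.sum_congr rfl (fun j _ => ?_)).symm
          norm_num [add_comm]
  refine le_trans ?_ key
  rw [intervalIntegral.integral_of_le (by nlinarith)]
  refine setIntegral_mono_set (expK_intble_Ioc hs hτ (by positivity))
    ?_ ?_
  · filter_upwards [ae_restrict_mem measurableSet_Ioc] with x hx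
    exact expK_nonneg (le_of_lt ((by positivity : (0:ℝ) ≤ 1 * Δ).trans_lt hx.1))
  · refine (Set.Ioc_subset_Ioc (by linarith) ?_).eventuallyLE
    rw [← hnΔ]; nlinarith

lemma sqrt_Ioc_monotone :
    Monotone (fun n : ℕ => Set.Ioc ((Real.sqrt n)⁻¹) (Real.sqrt n)) := by
  intro m n hmn
  rcases Nat.eq_zero_or_pos m with hm | hm
  · subst hm; simp
  · have hm0 : (0:ℝ) < m := by exact_mod_cast hm
    have hn0 : (0:ℝ) < n := lt_of_lt_of_le hm0 (by exact_mod_cast hmn)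
    have h1 : Real.sqrt m ≤ Real.sqrt n := Real.sqrt_le_sqrt (by exact_mod_cast hmn)
    exact Set.Ioc_subset_Ioc (by
      apply inv_anti₀ (Real.sqrt_pos.2 hm0) h1) h1

lemma sqrt_Ioc_iUnion :
    (⋃ n : ℕ, Set.Ioc ((Real.sqrt n)⁻¹) (Real.sqrt n)) = Set.Ioi (0:ℝ) := by
  ext x
  simp only [Set.mem_iUnion, Set.mem_Ioc, Set.mem_Ioi]
  constructor
  · rintro ⟨n, h1, _⟩
    exact lt_of_le_of_lt (inv_nonneg.2 (Real.sqrt_nonneg _)) h1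
  · intro hx
    obtain ⟨n, hn⟩ := exists_nat_ge ((max x x⁻¹ + 1) ^ 2)
    have hmax : 0 < max x x⁻¹ + 1 := by
      have : 0 < max x x⁻¹ := lt_max_of_lt_left hx
      linarith
    have hsqn : max x x⁻¹ + 1 ≤ Real.sqrt n := by
      rw [show Real.sqrt n = Real.sqrt n from rfl]
      have := Real.sqrt_le_sqrt hn
      rwa [Real.sqrt_sq hmax.le] at this
    have hxinv : x⁻¹ < Real.sqrt n := lt_of_lt_of_le (by
      have := le_max_right x x⁻¹
      linarith) hsqn
    refine ⟨n, ?_, ?_⟩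
    · rw [inv_lt_comm₀ (lt_trans (inv_pos.2 hx) hxinv) hx]
      exact hxinv
    · have := le_max_left x x⁻¹
      linarith

lemma expK_tendsto_middle {s τ : ℝ} (hs : 0 < s) (hτ : 0 < τ) :
    Tendsto (fun n : ℕ => ∫ x in Set.Ioc ((Real.sqrt n)⁻¹) (Real.sqrt n), expK s τ x)
      atTop (nhds (∫ x in Set.Ioi 0, expK s τ x)) := by
  have h := tendsto_setIntegral_of_monotone (μ := volume) (f := expK s τ)
    (s := fun n : ℕ => Set.Ioc ((Real.sqrt n)⁻¹) (Real.sqrt n))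
    (fun _ => measurableSet_Ioc) sqrt_Ioc_monotone
    (by rw [sqrt_Ioc_iUnion]; exact expK_integrable hs hτ)
  rwa [sqrt_Ioc_iUnion] at h

lemma expK_sum_tendsto {s τ : ℝ} (hs : 0 < s) (hs1 : s < 1) (hτ : 0 < τ) :
    Tendsto (fun n : ℕ => ∑ i ∈ Finset.Icc 1 n,
        (Real.sqrt n)⁻¹ * expK s τ ((i : ℝ) * (Real.sqrt n)⁻¹))
      atTop (nhds ((1 / τ) ^ s * Real.Gamma s)) := by
  have hI : (∫ x in Set.Ioi 0, expK s τ x) = (1 / τ) ^ s * Real.Gamma s := by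
    simpa [expK] using Real.integral_rpow_mul_exp_neg_mul_Ioi hs hτ
  rw [← hI]
  refine tendsto_of_tendsto_of_tendsto_of_le_of_le' (expK_tendsto_middle hs hτ)
    tendsto_const_nhds ?_ ?_
  · exact eventually_atTop.2 ⟨1, fun n hn => expK_integral_le_sum hs hs1 hτ hn⟩
  · exact Eventually.of_forall (fun n => expK_sum_le_integral hs hs1 hτ n)

/-- There exist positive weights and positive mean-reversion speeds such that the
`n`-term exponential kernels converge to the power-law kernel `τ ↦ τ^{H-1/2}` in
`L²([0,T])`. -/
theorem exp_kernels_approx_power_kernel (H T : ℝ)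
    (hH : H ∈ Set.Ioo (0:ℝ) (1/2)) (hT : 0 < T) :
    ∃ α x : ℕ → ℕ → ℝ,
      (∀ n i, 1 ≤ i → i ≤ n → 0 < α n i ∧ 0 < x n i) ∧
      Tendsto
        (fun n : ℕ =>
          (∫ τ in Set.Ioc (0:ℝ) T,
            ((∑ i ∈ Finset.Icc 1 n, α n i * Real.exp (-(x n i) * τ))
              - τ ^ (H - 1/2)) ^ 2) ^ (1/2 : ℝ))
        atTop (nhds 0) := by
  obtain ⟨hH0, hH2⟩ := hH
  set s : ℝ := 1 / 2 - H with hs_def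
  have hs : 0 < s := by simp only [hs_def]; linarith
  have hs1 : s < 1 := by simp only [hs_def]; linarith
  have hΓ : 0 < Real.Gamma s := Real.Gamma_pos_of_pos hs
  refine ⟨fun n i => ((i : ℝ) * (Real.sqrt n)⁻¹) ^ (s - 1) * (Real.sqrt n)⁻¹ / Real.Gamma s,
    fun n i => (i : ℝ) * (Real.sqrt n)⁻¹, ?_, ?_⟩
  · intro n i h1 hn
    have hn1 : (0:ℝ) < n := by exact_mod_cast lt_of_lt_of_le h1 hn
    have hi : (0:ℝ) < i := by exact_mod_cast h1
    have hsq : 0 < (Real.sqrt n)⁻¹ := inv_pos.2 (Real.sqrt_pos.2 hn1)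
    exact ⟨div_pos (mul_pos (Real.rpow_pos_of_pos (mul_pos hi hsq) _) hsq) hΓ,
      mul_pos hi hsq⟩
  · -- key identity : the kernel sum equals the expK Riemann sum divided by Γ s
    have hKn : ∀ (n : ℕ) (τ : ℝ),
        (∑ i ∈ Finset.Icc 1 n,
            ((i : ℝ) * (Real.sqrt n)⁻¹) ^ (s - 1) * (Real.sqrt n)⁻¹ / Real.Gamma s *
              Real.exp (-((i : ℝ) * (Real.sqrt n)⁻¹) * τ))
          = (∑ i ∈ Finset.Icc 1 n,
              (Real.sqrt n)⁻¹ * expK s τ ((i : ℝ) * (Real.sqrt n)⁻¹)) / Real.Gamma s := by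
      intro n τ
      rw [Finset.sum_div]
      refine Finset.sum_congr rfl (fun i _ => ?_)
      unfold expK
      rw [show -((i : ℝ) * (Real.sqrt n)⁻¹) * τ = -(τ * ((i : ℝ) * (Real.sqrt n)⁻¹)) by ring]
      ring
    -- pointwise convergence for τ > 0
    have hpt : ∀ τ : ℝ, 0 < τ →
        Tendsto (fun n : ℕ =>
            ∑ i ∈ Finset.Icc 1 n,
              ((i : ℝ) * (Real.sqrt n)⁻¹) ^ (s - 1) * (Real.sqrt n)⁻¹ / Real.Gamma s *
                Real.exp (-((i : ℝ) * (Real.sqrt n)⁻¹) * τ))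
          atTop (nhds (τ ^ (H - 1/2))) := by
      intro τ hτ
      have h := (expK_sum_tendsto hs hs1 hτ).div_const (Real.Gamma s)
      have hval : (1 / τ) ^ s * Real.Gamma s / Real.Gamma s = τ ^ (H - 1/2) := by
        rw [mul_div_assoc, div_self hΓ.ne', mul_one, one_div, Real.inv_rpow hτ.le,
          ← Real.rpow_neg hτ.le]
        congr 1
        rw [hs_def]; ring
      rw [hval] at h
      refine h.congr (fun n => (hKn n τ).symm)
    -- uniform bounds for τ > 0 : 0 ≤ Kₙ τ ≤ τ^(H-1/2)
    have hb0 : ∀ (n : ℕ) (τ : ℝ), 0 < τ →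
        0 ≤ ∑ i ∈ Finset.Icc 1 n,
            ((i : ℝ) * (Real.sqrt n)⁻¹) ^ (s - 1) * (Real.sqrt n)⁻¹ / Real.Gamma s *
              Real.exp (-((i : ℝ) * (Real.sqrt n)⁻¹) * τ) := by
      intro n τ hτ
      refine Finset.sum_nonneg (fun i _ => ?_)
      have : (0:ℝ) ≤ (i : ℝ) * (Real.sqrt n)⁻¹ := by positivity
      exact mul_nonneg (div_nonneg (mul_nonneg (Real.rpow_nonneg this _)
        (by positivity)) hΓ.le) (Real.exp_pos _).le
    have hb1 : ∀ (n : ℕ) (τ : ℝ), 0 < τ →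
        (∑ i ∈ Finset.Icc 1 n,
            ((i : ℝ) * (Real.sqrt n)⁻¹) ^ (s - 1) * (Real.sqrt n)⁻¹ / Real.Gamma s *
              Real.exp (-((i : ℝ) * (Real.sqrt n)⁻¹) * τ)) ≤ τ ^ (H - 1/2) := by
      intro n τ hτ
      rw [hKn n τ]
      have hub := expK_sum_le_integral hs hs1 hτ n
      have hI : (∫ x in Set.Ioi 0, expK s τ x) = (1 / τ) ^ s * Real.Gamma s := by
        simpa [expK] using Real.integral_rpow_mul_exp_neg_mul_Ioi hs hτ
      rw [hI] at hub
      have hval : (1 / τ) ^ s * Real.Gamma s / Real.Gamma s = τ ^ (H - 1/2) := by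
        rw [mul_div_assoc, div_self hΓ.ne', mul_one, one_div, Real.inv_rpow hτ.le,
          ← Real.rpow_neg hτ.le]
        congr 1
        rw [hs_def]; ring
      calc _ ≤ (1 / τ) ^ s * Real.Gamma s / Real.Gamma s := by gcongr
        _ = τ ^ (H - 1/2) := hval
    -- dominated convergence
    set Kn : ℕ → ℝ → ℝ := fun n τ =>
      ∑ i ∈ Finset.Icc 1 n,
        ((i : ℝ) * (Real.sqrt n)⁻¹) ^ (s - 1) * (Real.sqrt n)⁻¹ / Real.Gamma s *
          Real.exp (-((i : ℝ) * (Real.sqrt n)⁻¹) * τ) with hKndef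
    have hKmeas : Measurable (fun τ : ℝ => τ ^ (H - 1/2)) := by
      exact measurable_id'.pow_const _
    have hmeas : ∀ n : ℕ, AEStronglyMeasurable
        (fun τ : ℝ => (Kn n τ - τ ^ (H - 1/2)) ^ 2)
        (volume.restrict (Set.Ioc (0:ℝ) T)) := by
      intro n
      have hKncont : Continuous (Kn n) := by
        refine continuous_finset_sum _ (fun i _ => ?_)
        exact continuous_const.mul ((continuous_const.mul continuous_id).rexp)
      exact (((hKncont.measurable.sub hKmeas).pow_const 2)).aestronglyMeasurable
    have hbound_int : Integrable (fun τ : ℝ => (τ ^ (H - 1/2)) ^ 2)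
        (volume.restrict (Set.Ioc (0:ℝ) T)) := by
      have h2 : IntegrableOn (fun τ : ℝ => τ ^ (2 * H - 1)) (Set.Ioc (0:ℝ) T) :=
        (intervalIntegral.intervalIntegrable_rpow' (by linarith)).1
      refine h2.congr_fun (fun τ hτ => ?_) measurableSet_Ioc
      rw [sq, ← Real.rpow_add hτ.1]
      congr 1
      ring
    have hdom := tendsto_integral_of_dominated_convergence
      (μ := volume.restrict (Set.Ioc (0:ℝ) T))
      (F := fun (n : ℕ) (τ : ℝ) => (Kn n τ - τ ^ (H - 1/2)) ^ 2)
      (f := fun _ : ℝ => (0:ℝ))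
      (bound := fun τ : ℝ => (τ ^ (H - 1/2)) ^ 2)
      hmeas hbound_int
      (by
        intro n
        filter_upwards [ae_restrict_mem measurableSet_Ioc] with τ hτm
        have hτ0 := hτm.1
        have h0 := hb0 n τ hτ0
        have h1 := hb1 n τ hτ0
        have hKpos : 0 ≤ τ ^ (H - 1/2) := Real.rpow_nonneg hτ0.le _
        rw [Real.norm_eq_abs, abs_of_nonneg (sq_nonneg _)]
        exact sq_le_sq' (by simp only [hKndef] at h0 ⊢; linarith)
          (by simp only [hKndef] at h1 ⊢; linarith))
      (by
        filter_upwards [ae_restrict_mem measurableSet_Ioc] with τ hτm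
        have h := hpt τ hτm.1
        have h2 := (h.sub (tendsto_const_nhds (x := τ ^ (H - 1/2)))).pow 2
        have h3 : ((τ : ℝ) ^ (H - 1/2) - τ ^ (H - 1/2)) ^ 2 = (0:ℝ) := by simp
        rw [← h3]
        exact h2)
    rw [integral_zero] at hdom
    have hcont : ContinuousAt (fun y : ℝ => y ^ (1/2 : ℝ)) 0 :=
      Real.continuousAt_rpow_const 0 _ (Or.inr (by norm_num))
    have hfinal := hcont.tendsto.comp hdom
    rw [Real.zero_rpow (by norm_num : (1/2 : ℝ) ≠ 0)] at hfinal
    exact hfinal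
end

section
/- Let ν be a nonzero finite measure on ℝ supported in an interval [a, b] with 0 ≤ a ≤ b, with mean x̄ = (∫ x dν(x)) / ν(ℝ), and let T > 0. Then the L²([0,T]) distance between t ↦ ν(ℝ)e^{-x̄ t} and t ↦ ∫ e^{-x t} dν(x) is at most (T^{5/2}/(2√5)) · ∫ (x − x̄)² dν(x). -/
open MeasureTheory Real

lemma nonneg_of_hasDerivAt {f f' : ℝ → ℝ} (hf : ∀ x, HasDerivAt f (f' x) x)
    (h0 : f 0 = 0) (hd : ∀ x, 0 ≤ x → 0 ≤ f' x) {w : ℝ} (hw : 0 ≤ w) : 0 ≤ f w := by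
  have mono : MonotoneOn f (Set.Ici 0) := by
    apply monotoneOn_of_deriv_nonneg (convex_Ici 0)
    · exact fun x _ => (hf x).continuousAt.continuousWithinAt
    · exact fun x _ => (hf x).differentiableAt.differentiableWithinAt
    · intro x hx
      rw [(hf x).deriv]
      exact hd x (le_of_lt (by simpa using hx))
  simpa [h0] using mono (Set.self_mem_Ici) (Set.mem_Ici.2 hw) hw

lemma exp_neg_deriv (x : ℝ) : HasDerivAt (fun y : ℝ => Real.exp (-y)) (-Real.exp (-x)) x := by
  exact ((Real.hasDerivAt_exp (-x)).comp x (hasDerivAt_neg x)).congr_deriv (by simp)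

lemma aux1 {w : ℝ} (hw : 0 ≤ w) : Real.exp (-w) - 1 + w ≤ w ^ 2 / 2 := by
  have h := nonneg_of_hasDerivAt (f := fun y => y ^ 2 / 2 - (Real.exp (-y) - 1 + y))
    (f' := fun y => y - (-Real.exp (-y) + 1))
    (fun x => by
      have h1 : HasDerivAt (fun y : ℝ => y ^ 2 / 2) x x := by
        simpa using ((hasDerivAt_pow 2 x).div_const 2)
      have h2 : HasDerivAt (fun y : ℝ => Real.exp (-y) - 1 + y) (-Real.exp (-x) + 1) x := by
        exact ((exp_neg_deriv x).sub_const 1).add (hasDerivAt_id x)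
      exact h1.sub h2)
    (by norm_num)
    (fun x hx => by
      nlinarith [Real.add_one_le_exp (-x)]) hw
  linarith

lemma aux2 {w : ℝ} (hw : 0 ≤ w) : 1 - Real.exp (-w) * (1 + w) ≤ w ^ 2 / 2 := by
  have h := nonneg_of_hasDerivAt (f := fun y => Real.exp (-y) * (1 + y) - 1 + y ^ 2 / 2)
    (f' := fun y => (-Real.exp (-y) * (1 + y) + Real.exp (-y)) + y)
    (fun x => by
      have h1 : HasDerivAt (fun y : ℝ => Real.exp (-y) * (1 + y)) (-Real.exp (-x) * (1 + x) + Real.exp (-x) * 1) x :=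
        (exp_neg_deriv x).mul ((hasDerivAt_id x).const_add 1)
      have h2 : HasDerivAt (fun y : ℝ => y ^ 2 / 2) x x := by
        simpa using ((hasDerivAt_pow 2 x).div_const 2)
      have := (h1.sub_const 1).add h2
      refine this.congr_deriv ?_
      ring)
    (by norm_num)
    (fun x hx => by
      have h1 : Real.exp (-x) ≤ 1 := Real.exp_le_one_iff.2 (by linarith)
      nlinarith [Real.exp_pos (-x)]) hw
  linarith

lemma key {u v : ℝ} (hu : 0 ≤ u) (hv : 0 ≤ v) :
    |Real.exp (-u) - Real.exp (-v) + Real.exp (-v) * (u - v)| ≤ (u - v) ^ 2 / 2 := by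
  have hsplit : ∀ p q : ℝ, Real.exp (-(p + q)) = Real.exp (-p) * Real.exp (-q) := by
    intro p q; rw [← Real.exp_add]; ring_nf
  rw [abs_le]
  constructor
  · -- lower bound: expression is nonneg
    have h1 : Real.exp (-u) - Real.exp (-v) + Real.exp (-v) * (u - v)
        = Real.exp (-v) * (Real.exp (v - u) - 1 - (v - u)) := by
      have : Real.exp (-u) = Real.exp (-v) * Real.exp (v - u) := by
        rw [← Real.exp_add]; ring_nf
      rw [this]; ring
    rw [h1]
    have h2 : (0:ℝ) ≤ Real.exp (v - u) - 1 - (v - u) := by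
      nlinarith [Real.add_one_le_exp (v - u)]
    nlinarith [Real.exp_pos (-v), sq_nonneg (u - v)]
  · rcases le_total v u with hvu | huv
    · -- u ≥ v, w = u - v
      set w := u - v with hwdef
      have hw : 0 ≤ w := by simp [hwdef]; linarith
      have h1 : Real.exp (-u) - Real.exp (-v) + Real.exp (-v) * (u - v)
          = Real.exp (-v) * (Real.exp (-w) - 1 + w) := by
        have : Real.exp (-u) = Real.exp (-v) * Real.exp (-w) := by
          rw [← Real.exp_add, hwdef]; ring_nf
        rw [this]; ring
      rw [h1]
      have h2 : (0:ℝ) ≤ Real.exp (-w) - 1 + w := by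
        nlinarith [Real.add_one_le_exp (-w)]
      have h3 : Real.exp (-v) ≤ 1 := Real.exp_le_one_iff.2 (by linarith)
      have h4 := aux1 hw
      nlinarith [Real.exp_pos (-v)]
    · -- u ≤ v, w = v - u
      set w := v - u with hwdef
      have hw : 0 ≤ w := by simp [hwdef]; linarith
      have h1 : Real.exp (-u) - Real.exp (-v) + Real.exp (-v) * (u - v)
          = Real.exp (-u) * (1 - Real.exp (-w) * (1 + w)) := by
        have : Real.exp (-v) = Real.exp (-u) * Real.exp (-w) := by
          rw [← Real.exp_add, hwdef]; ring_nf
        rw [this]; ring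
      rw [h1]
      have h2 : (0:ℝ) ≤ 1 - Real.exp (-w) * (1 + w) := by
        have hA : Real.exp (-w) * (1 + w) ≤ Real.exp (-w) * Real.exp w :=
          mul_le_mul_of_nonneg_left (by linarith [Real.add_one_le_exp w]) (Real.exp_pos (-w)).le
        have hB : Real.exp (-w) * Real.exp w = 1 := by rw [← Real.exp_add]; simp
        linarith
      have h3 : Real.exp (-u) ≤ 1 := Real.exp_le_one_iff.2 (by linarith)
      have h4 := aux2 hw
      have hsq : (u - v) ^ 2 = w ^ 2 := by rw [hwdef]; ring
      rw [hsq]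
      nlinarith [Real.exp_pos (-u)]

/-- `L²([0,T])` version of the second-order Taylor bound: for a nonzero finite measure `ν`
supported in `[a,b]` with `0 ≤ a`, and mean `x̄`, the `L²([0,T])` distance between
`t ↦ ν(ℝ)e^{-x̄t}` and `t ↦ ∫ e^{-xt} dν` is at most `(T^{5/2}/(2√5))·∫(x-x̄)² dν`. -/
theorem exp_mean_L2_bound (ν : Measure ℝ) [IsFiniteMeasure ν] (hν : ν ≠ 0)
    (a b : ℝ) (ha : 0 ≤ a) (hab : a ≤ b) (hsupp : ν (Set.Icc a b)ᶜ = 0)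
    (xbar : ℝ) (hxbar : xbar = (∫ x, x ∂ν) / (ν Set.univ).toReal)
    (T : ℝ) (hT : 0 < T) :
    (∫ t in Set.Ioc (0:ℝ) T,
        ((ν Set.univ).toReal * Real.exp (-xbar * t) - ∫ x, Real.exp (-x * t) ∂ν) ^ 2)
      ^ (1/2 : ℝ)
      ≤ T ^ ((5:ℝ)/2) / (2 * Real.sqrt 5) * ∫ x, (x - xbar) ^ 2 ∂ν := by
  set M : ℝ := (ν Set.univ).toReal with hMdef
  set C : ℝ := ∫ x, (x - xbar) ^ 2 ∂ν with hCdef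
  have hM : 0 < M := by
    rw [hMdef]
    exact ENNReal.toReal_pos (by simpa [Measure.measure_univ_eq_zero] using hν)
      (measure_ne_top ν _)
  have hae : ∀ᵐ x ∂ν, x ∈ Set.Icc a b := by
    rw [ae_iff]
    exact hsupp
  -- integrability of id and square
  have hid : Integrable (fun x => x) ν := by
    refine Integrable.mono' (integrable_const b) aestronglyMeasurable_id ?_
    filter_upwards [hae] with x hx
    rw [Real.norm_eq_abs, abs_le]
    exact ⟨by linarith [hx.1], hx.2⟩
  have hsq : Integrable (fun x => (x - xbar) ^ 2) ν := by
    refine Integrable.mono' (integrable_const ((b + |xbar|) ^ 2)) ?_ ?_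
    · exact ((measurable_id.sub_const xbar).pow_const 2).aestronglyMeasurable
    · filter_upwards [hae] with x hx
      rw [Real.norm_eq_abs, abs_of_nonneg (sq_nonneg _)]
      have h1 : |x - xbar| ≤ b + |xbar| := by
        rw [abs_sub_le_iff]
        constructor
        · have := abs_nonneg xbar; have := neg_abs_le xbar; linarith [hx.2]
        · have := le_abs_self xbar; linarith [hx.1]
      calc (x - xbar) ^ 2 = |x - xbar| ^ 2 := (sq_abs _).symm
        _ ≤ (b + |xbar|) ^ 2 := by
            apply pow_le_pow_left₀ (abs_nonneg _) h1
  have hC : 0 ≤ C := integral_nonneg fun x => sq_nonneg _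
  have hmean : ∫ x, x ∂ν = xbar * M := by
    rw [hxbar]; field_simp
  have hxbar0 : 0 ≤ xbar := by
    rw [hxbar]
    apply div_nonneg _ hM.le
    exact integral_nonneg_of_ae (hae.mono fun x hx => le_trans ha hx.1)
  have hzero : ∫ x, (x - xbar) ∂ν = 0 := by
    rw [integral_sub hid (integrable_const xbar), integral_const, hmean]
    simp [hMdef, smul_eq_mul, measureReal_def]
    ring
  -- pointwise bound
  have hpt : ∀ t : ℝ, 0 ≤ t →
      |M * Real.exp (-xbar * t) - ∫ x, Real.exp (-x * t) ∂ν| ≤ t ^ 2 / 2 * C := by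
    intro t ht
    have hexpint : Integrable (fun x => Real.exp (-x * t)) ν := by
      refine Integrable.mono' (integrable_const 1) ?_ ?_
      · exact (Real.continuous_exp.comp ((continuous_id.neg).mul continuous_const)).aestronglyMeasurable
      · filter_upwards [hae] with x hx
        rw [Real.norm_eq_abs, abs_of_pos (Real.exp_pos _)]
        apply Real.exp_le_one_iff.2
        have hx0 : 0 ≤ x := le_trans ha hx.1
        nlinarith
    have hlin : Integrable (fun x => Real.exp (-xbar * t) * t * (x - xbar)) ν :=
      (hid.sub (integrable_const xbar)).const_mul _
    have hbracket : Integrable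
        (fun x => Real.exp (-x * t) - Real.exp (-xbar * t) + Real.exp (-xbar * t) * t * (x - xbar)) ν :=
      (hexpint.sub (integrable_const _)).add hlin
    have e1 : ∫ x, (Real.exp (-x * t) - Real.exp (-xbar * t) + Real.exp (-xbar * t) * t * (x - xbar)) ∂ν
        = (∫ x, (Real.exp (-x * t) - Real.exp (-xbar * t)) ∂ν)
          + ∫ x, Real.exp (-xbar * t) * t * (x - xbar) ∂ν :=
      integral_add (hexpint.sub (integrable_const _)) hlin
    have e2 : ∫ x, (Real.exp (-x * t) - Real.exp (-xbar * t)) ∂ν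
        = (∫ x, Real.exp (-x * t) ∂ν) - M * Real.exp (-xbar * t) := by
      rw [integral_sub hexpint (integrable_const _), integral_const]
      simp [hMdef, smul_eq_mul, measureReal_def]
    have e3 : ∫ x, Real.exp (-xbar * t) * t * (x - xbar) ∂ν = 0 := by
      rw [integral_const_mul, hzero, mul_zero]
    have heq : M * Real.exp (-xbar * t) - ∫ x, Real.exp (-x * t) ∂ν
        = -∫ x, (Real.exp (-x * t) - Real.exp (-xbar * t) + Real.exp (-xbar * t) * t * (x - xbar)) ∂ν := by
      rw [e1, e2, e3]
      ring
    rw [heq, abs_neg]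
    have hnorm : ‖∫ x, (Real.exp (-x * t) - Real.exp (-xbar * t) + Real.exp (-xbar * t) * t * (x - xbar)) ∂ν‖
        ≤ ∫ x, t ^ 2 / 2 * (x - xbar) ^ 2 ∂ν := by
      apply norm_integral_le_of_norm_le (hsq.const_mul _)
      filter_upwards [hae] with x hx
      have hx0 : 0 ≤ x := le_trans ha hx.1
      have hk := key (u := x * t) (v := xbar * t) (mul_nonneg hx0 ht) (mul_nonneg hxbar0 ht)
      rw [Real.norm_eq_abs]
      calc |Real.exp (-x * t) - Real.exp (-xbar * t) + Real.exp (-xbar * t) * t * (x - xbar)|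
          = |Real.exp (-(x * t)) - Real.exp (-(xbar * t)) + Real.exp (-(xbar * t)) * (x * t - xbar * t)| := by
            ring_nf
        _ ≤ (x * t - xbar * t) ^ 2 / 2 := hk
        _ = t ^ 2 / 2 * (x - xbar) ^ 2 := by ring
    rw [← Real.norm_eq_abs]
    calc ‖∫ x, (Real.exp (-x * t) - Real.exp (-xbar * t) + Real.exp (-xbar * t) * t * (x - xbar)) ∂ν‖
        ≤ ∫ x, t ^ 2 / 2 * (x - xbar) ^ 2 ∂ν := hnorm
      _ = t ^ 2 / 2 * C := by rw [integral_const_mul]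
  -- measurability of the error function
  have hmeas : StronglyMeasurable (fun t : ℝ => ∫ x, Real.exp (-x * t) ∂ν) := by
    apply StronglyMeasurable.integral_prod_right' (f := fun p : ℝ × ℝ => Real.exp (-p.2 * p.1))
    exact (Real.continuous_exp.comp ((continuous_snd.neg).mul continuous_fst)).stronglyMeasurable
  set E : ℝ → ℝ := fun t => M * Real.exp (-xbar * t) - ∫ x, Real.exp (-x * t) ∂ν with hEdef
  have hEmeas : StronglyMeasurable E :=
    ((stronglyMeasurable_const.mul (Real.continuous_exp.comp
      (continuous_const.mul continuous_id)).stronglyMeasurable).sub hmeas)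
  have hGint : IntegrableOn (fun t => (t ^ 2 / 2 * C) ^ 2) (Set.Ioc 0 T) := by
    apply Continuous.integrableOn_Ioc
    fun_prop
  have hFint : IntegrableOn (fun t => E t ^ 2) (Set.Ioc 0 T) := by
    refine Integrable.mono' hGint ((hEmeas.pow 2).aestronglyMeasurable) ?_
    rw [ae_restrict_iff' measurableSet_Ioc]
    apply ae_of_all
    intro t ht
    rw [Real.norm_eq_abs, abs_of_nonneg (sq_nonneg _), ← sq_abs (E t)]
    exact pow_le_pow_left₀ (abs_nonneg _) (hpt t ht.1.le) 2
  have hle : ∫ t in Set.Ioc (0:ℝ) T, E t ^ 2 ≤ ∫ t in Set.Ioc (0:ℝ) T, (t ^ 2 / 2 * C) ^ 2 := by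
    apply setIntegral_mono_on hFint hGint measurableSet_Ioc
    intro t ht
    rw [← sq_abs (E t)]
    exact pow_le_pow_left₀ (abs_nonneg _) (hpt t ht.1.le) 2
  have hval : ∫ t in Set.Ioc (0:ℝ) T, (t ^ 2 / 2 * C) ^ 2 = C ^ 2 * T ^ 5 / 20 := by
    rw [← intervalIntegral.integral_of_le hT.le]
    have : ∀ t : ℝ, (t ^ 2 / 2 * C) ^ 2 = C ^ 2 / 4 * t ^ 4 := fun t => by ring
    simp_rw [this]
    rw [intervalIntegral.integral_const_mul, integral_pow]
    ring
  have hnn : 0 ≤ ∫ t in Set.Ioc (0:ℝ) T, E t ^ 2 :=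
    setIntegral_nonneg measurableSet_Ioc fun t _ => sq_nonneg _
  have hfinal : (∫ t in Set.Ioc (0:ℝ) T, E t ^ 2) ^ (1/2 : ℝ)
      ≤ (C ^ 2 * T ^ 5 / 20) ^ (1/2 : ℝ) :=
    Real.rpow_le_rpow hnn (hval ▸ hle) (by norm_num)
  have hrhs : (C ^ 2 * T ^ 5 / 20) ^ (1/2 : ℝ) = T ^ ((5:ℝ)/2) / (2 * Real.sqrt 5) * C := by
    rw [← Real.sqrt_eq_rpow]
    rw [show (C ^ 2 * T ^ 5 / 20 : ℝ) = (C^2) * (T^5 / 20) by ring]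
    rw [Real.sqrt_mul (sq_nonneg C), Real.sqrt_sq hC,
      Real.sqrt_div (by positivity : (0:ℝ) ≤ T ^ 5)]
    have h20 : Real.sqrt 20 = 2 * Real.sqrt 5 := by
      rw [show (20:ℝ) = 2 ^ 2 * 5 by norm_num, Real.sqrt_mul (by positivity),
        Real.sqrt_sq (by norm_num : (0:ℝ) ≤ 2)]
    have hT5 : Real.sqrt (T ^ 5) = T ^ ((5:ℝ)/2) := by
      rw [Real.sqrt_eq_rpow, ← Real.rpow_natCast T 5, ← Real.rpow_mul hT.le]
      norm_num
    rw [h20, hT5]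
    ring
  show (∫ t in Set.Ioc (0:ℝ) T, E t ^ 2) ^ (1/2 : ℝ) ≤ T ^ ((5:ℝ)/2) / (2 * Real.sqrt 5) * C
  exact le_trans hfinal (le_of_eq hrhs)
end

section
/- Fix H ∈ (0, 1/2), ξ₀ > 0, η > 0, ρ ∈ [−1, 1], and for T > 0 define C^{Xξ}(T) = ρ·η·√(2H)·ξ₀^{3/2} · ∫₀^T ∫_s^T (u − s)^{H − 1/2} du ds, v(T) = ξ₀·T and σ̂ = √ξ₀. Then the first-order at-the-money skew coefficient satisfies σ̂ · C^{Xξ}(T) / (2·v(T)²) = (ρ·η·√(2H) / (2·(H + 1/2)·(H + 3/2))) · T^{H − 1/2} for all T > 0; in particular it is a constant multiple of T^{H − 1/2}. -/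
open MeasureTheory Real

lemma inner_int (H T s : ℝ) (hH : 0 < H) (hs : s ≤ T) :
    ∫ u in Set.Ioc s T, (u - s) ^ (H - 1/2) = (T - s) ^ (H + 1/2) / (H + 1/2) := by
  rw [← intervalIntegral.integral_of_le hs]
  have h := intervalIntegral.integral_comp_sub_right (a := s) (b := T)
    (fun x : ℝ => x ^ (H - 1/2)) s
  simp only [sub_self] at h
  have hne : H - 1/2 + 1 ≠ 0 := by
    have : (0:ℝ) < H - 1/2 + 1 := by linarith
    exact this.ne'
  rw [h, integral_rpow (Or.inl (by linarith)), Real.zero_rpow hne]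
  ring_nf

lemma outer_int (H T : ℝ) (hH : 0 < H) (hT : 0 < T) :
    ∫ s in Set.Ioc (0:ℝ) T, (T - s) ^ (H + 1/2) / (H + 1/2)
      = T ^ (H + 3/2) / ((H + 1/2) * (H + 3/2)) := by
  rw [← intervalIntegral.integral_of_le hT.le]
  have h := intervalIntegral.integral_comp_sub_left (a := (0:ℝ)) (b := T)
    (fun x : ℝ => x ^ (H + 1/2) / (H + 1/2)) T
  simp only [sub_self, sub_zero] at h
  have hne : H + 1/2 + 1 ≠ 0 := by
    have : (0:ℝ) < H + 1/2 + 1 := by linarith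
    exact this.ne'
  rw [h, intervalIntegral.integral_div, integral_rpow (Or.inl (by linarith)),
    Real.zero_rpow hne, show H + 1/2 + 1 = H + 3/2 by ring]
  have h1 : H + 1/2 ≠ 0 := by positivity
  have h2 : H + 3/2 ≠ 0 := by positivity
  field_simp
  ring

/-- In the rough Bergomi model with flat initial forward variance curve, the first-order
at-the-money skew coefficient is a constant multiple of `T^{H-1/2}`. -/
theorem rBergomi_skew_power_law (H ξ₀ η ρ : ℝ) (hH : H ∈ Set.Ioo (0:ℝ) (1/2))
    (hξ : 0 < ξ₀) (hη : 0 < η) (hρ : ρ ∈ Set.Icc (-1:ℝ) 1) (T : ℝ) (hT : 0 < T) :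
    let CXxi : ℝ := ρ * η * Real.sqrt (2*H) * ξ₀ ^ ((3:ℝ)/2) *
      ∫ s in Set.Ioc (0:ℝ) T, ∫ u in Set.Ioc s T, (u - s) ^ (H - 1/2)
    let v : ℝ := ξ₀ * T
    Real.sqrt ξ₀ * CXxi / (2 * v ^ 2)
      = (ρ * η * Real.sqrt (2*H) / (2 * (H + 1/2) * (H + 3/2))) * T ^ (H - 1/2) := by
  intro CXxi v
  obtain ⟨hH0, hH2⟩ := hH
  have hI : (∫ s in Set.Ioc (0:ℝ) T, ∫ u in Set.Ioc s T, (u - s) ^ (H - 1/2))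
      = T ^ (H + 3/2) / ((H + 1/2) * (H + 3/2)) := by
    rw [setIntegral_congr_fun measurableSet_Ioc (fun s hs => inner_int H T s hH0 hs.2)]
    exact outer_int H T hH0 hT
  have hsq : Real.sqrt ξ₀ * ξ₀ ^ ((3:ℝ)/2) = ξ₀ ^ 2 := by
    rw [← Real.rpow_natCast ξ₀ 2, Real.sqrt_eq_rpow, ← Real.rpow_add hξ]
    norm_num
  have hTp : T ^ (H + 3/2) = T ^ (H - 1/2) * T ^ 2 := by
    rw [← Real.rpow_natCast T 2, ← Real.rpow_add hT]
    norm_num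
    ring_nf
  show Real.sqrt ξ₀ * CXxi / (2 * v ^ 2) = _
  simp only [CXxi, v, hI]
  rw [hTp]
  have h1 : H + 1/2 ≠ 0 := by positivity
  have h2 : H + 3/2 ≠ 0 := by positivity
  have hξ' : ξ₀ ≠ 0 := hξ.ne'
  have hT' : T ≠ 0 := hT.ne'
  field_simp
  ring_nf
  linear_combination ρ * hsq
end
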